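/- Let Q = ((a,b),(b,c)) be a positive definite even binary quadratic form with 0 ≤ 2b ≤ a ≤ c. Then the fiber of the natural projection from SL_2(Z)-orbits to GL_2(Z)-orbits over the orbit of Q has cardinality 2 if 0 < 2b < a < c, and cardinality 1 otherwise. -/

import Mathlib

open Matrix

/-- `SL₂(ℤ)`-equivalence of integer matrices under `Q ↦ gᵀ Q g`. -/
def SLEquiv (Q Q' : Matrix (Fin 2) (Fin 2) ℤ) : Prop :=
  ∃ g : Matrix (Fin 2) (Fin 2) ℤ, g.det = 1 ∧ g.transpose * Q * g = Q'

/-- `GL₂(ℤ)`-equivalence of integer matrices under `Q ↦ gᵀ Q g`. -/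
def GLEquiv (Q Q' : Matrix (Fin 2) (Fin 2) ℤ) : Prop :=
  ∃ g : Matrix (Fin 2) (Fin 2) ℤ, IsUnit g.det ∧ g.transpose * Q * g = Q'

lemma transpose_fin_two' (p q r s : ℤ) : (!![p, q; r, s])ᵀ = !![p, r; q, s] := by
  ext i j; fin_cases i <;> fin_cases j <;> simp

lemma conj_fin_two (a b c p q r s : ℤ) :
    (!![p, q; r, s])ᵀ * !![a, b; b, c] * !![p, q; r, s] =
      !![a*p^2 + 2*b*p*r + c*r^2, a*p*q + b*(p*s + q*r) + c*r*s;
         a*p*q + b*(p*s + q*r) + c*r*s, a*q^2 + 2*b*q*s + c*s^2] := by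
  rw [transpose_fin_two']
  ext i j
  fin_cases i <;> fin_cases j <;>
    simp [Matrix.mul_apply, Fin.sum_univ_two, Matrix.transpose_apply] <;> ring

lemma slequiv_refl (Q : Matrix (Fin 2) (Fin 2) ℤ) : SLEquiv Q Q :=
  ⟨1, Matrix.det_one, by simp⟩

lemma slequiv_symm {Q Q' : Matrix (Fin 2) (Fin 2) ℤ} (h : SLEquiv Q Q') : SLEquiv Q' Q := by
  obtain ⟨g, hg, he⟩ := h
  have hu : IsUnit g.det := hg ▸ isUnit_one
  have h1 : g * g⁻¹ = 1 := Matrix.mul_nonsing_inv g hu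
  refine ⟨g⁻¹, ?_, ?_⟩
  · rw [Matrix.det_nonsing_inv, hg]; simp
  · calc (g⁻¹)ᵀ * Q' * g⁻¹ = (g * g⁻¹)ᵀ * Q * (g * g⁻¹) := by
          rw [← he, Matrix.transpose_mul]
          simp only [Matrix.mul_assoc]
    _ = Q := by rw [h1]; simp

lemma slequiv_trans {Q Q' Q'' : Matrix (Fin 2) (Fin 2) ℤ}
    (h : SLEquiv Q Q') (h' : SLEquiv Q' Q'') : SLEquiv Q Q'' := by
  obtain ⟨g, hg, he⟩ := h
  obtain ⟨g', hg', he'⟩ := h'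
  refine ⟨g * g', by rw [Matrix.det_mul, hg, hg']; ring, ?_⟩
  rw [← he', ← he, Matrix.transpose_mul]
  simp only [Matrix.mul_assoc]

lemma key_arith (a b c p q r s : ℤ) (h1 : 0 < 2*b) (h2 : 2*b < a) (h3 : a < c)
    (hdet : p*s - q*r = 1)
    (E1 : a*p^2 + 2*b*p*r + c*r^2 = a)
    (E2 : a*p*q + b*(p*s + q*r) + c*r*s = -b) : False := by
  have hr : r = 0 := by
    by_contra hr
    have hr2 : 1 ≤ r^2 := by rcases lt_or_gt_of_ne hr with h | h <;> nlinarith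
    rcases eq_or_ne p 0 with hp | hp
    · rw [hp] at E1; nlinarith
    · have hp2 : 1 ≤ p^2 := by rcases lt_or_gt_of_ne hp with h | h <;> nlinarith
      nlinarith [mul_nonneg (by linarith : (0:ℤ) ≤ b) (sq_nonneg (p + r)),
        mul_nonneg (by linarith : (0:ℤ) ≤ a - b) (by linarith : (0:ℤ) ≤ p^2 - 1),
        mul_nonneg (by linarith : (0:ℤ) ≤ c - b) (by linarith : (0:ℤ) ≤ r^2 - 1)]
  subst hr
  have hps : p * s = 1 := by linarith
  have E2' : a*p*q + b = -b := by nlinarith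
  rcases Int.isUnit_iff.mp (IsUnit.of_mul_eq_one s hps) with hp | hp <;> subst hp
  · have hq' : a * q = -(2*b) := by linarith
    have hq1 : q ≤ -1 := by
      by_contra hcon
      push_neg at hcon
      have : 0 ≤ a * q := mul_nonneg (by linarith) (by omega)
      linarith
    have : a * q ≤ a * (-1) := mul_le_mul_of_nonneg_left (by linarith) (by linarith)
    linarith
  · have hq' : a * q = 2*b := by linarith
    have hq1 : 1 ≤ q := by
      by_contra hcon
      push_neg at hcon
      have : a * q ≤ 0 := mul_nonpos_of_nonneg_of_nonpos (by linarith) (by omega)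
      linarith
    have : a * 1 ≤ a * q := mul_le_mul_of_nonneg_left (by linarith) (by linarith)
    linarith

set_option maxHeartbeats 2000000 in
theorem stmt_2 (a b c : ℤ) (ha : Even a) (hc : Even c)
    (hpos : 0 < a) (hdet : 0 < a * c - b ^ 2)
    (hred : 0 ≤ 2 * b ∧ 2 * b ≤ a ∧ a ≤ c) :
    Nat.card (Quot (fun x y : {Q' : Matrix (Fin 2) (Fin 2) ℤ // GLEquiv !![a, b; b, c] Q'} =>
        SLEquiv x.1 y.1)) =
      if 0 < 2 * b ∧ 2 * b < a ∧ a < c then 2 else 1 := by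
  obtain ⟨hb0, hba, hac⟩ := hred
  set Qm : Matrix (Fin 2) (Fin 2) ℤ := !![a, b; b, c] with hQm
  set Qn : Matrix (Fin 2) (Fin 2) ℤ := !![a, -b; -b, c] with hQn
  set rel : {Q' : Matrix (Fin 2) (Fin 2) ℤ // GLEquiv Qm Q'} →
      {Q' : Matrix (Fin 2) (Fin 2) ℤ // GLEquiv Qm Q'} → Prop :=
    fun x y => SLEquiv x.1 y.1 with hrel
  have hequiv : Equivalence rel :=
    ⟨fun x => slequiv_refl _, fun h => slequiv_symm h, fun h h' => slequiv_trans h h'⟩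
  have hGLQn : GLEquiv Qm Qn := by
    refine ⟨!![1, 0; 0, -1], by rw [Matrix.det_fin_two_of]; exact Int.isUnit_iff.mpr (Or.inr (by ring)), ?_⟩
    rw [hQm, hQn, conj_fin_two]
    norm_num
  -- if det g = -1 then Q' is SL-equivalent to Qn
  have hneg : ∀ Q' : Matrix (Fin 2) (Fin 2) ℤ, ∀ g : Matrix (Fin 2) (Fin 2) ℤ,
      g.det = -1 → gᵀ * Qm * g = Q' → SLEquiv Qn Q' := by
    intro Q' g hg he
    refine ⟨!![1, 0; 0, -1] * g, ?_, ?_⟩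
    · rw [Matrix.det_mul, hg, Matrix.det_fin_two_of]; ring
    · have hd : (!![1, 0; 0, -1] : Matrix (Fin 2) (Fin 2) ℤ)ᵀ * Qn * !![1, 0; 0, -1] = Qm := by
        rw [hQn, hQm, conj_fin_two]; norm_num
      calc (!![1, 0; 0, -1] * g)ᵀ * Qn * (!![1, 0; 0, -1] * g)
          = gᵀ * ((!![1, 0; 0, -1] : Matrix (Fin 2) (Fin 2) ℤ)ᵀ * Qn * !![1, 0; 0, -1]) * g := by
            rw [Matrix.transpose_mul]; simp only [Matrix.mul_assoc]
        _ = Q' := by rw [hd, he]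
  by_cases hcond : 0 < 2 * b ∧ 2 * b < a ∧ a < c
  · rw [if_pos hcond]
    obtain ⟨h1, h2, h3⟩ := hcond
    have hnot : ¬ SLEquiv Qm Qn := by
      rintro ⟨g, hg, he⟩
      rw [Matrix.eta_fin_two g] at hg he
      rw [hQm, hQn, conj_fin_two] at he
      rw [Matrix.det_fin_two_of] at hg
      have E1 := congrArg (fun M : Matrix (Fin 2) (Fin 2) ℤ => M 0 0) he
      have E2 := congrArg (fun M : Matrix (Fin 2) (Fin 2) ℤ => M 0 1) he
      simp only [Matrix.of_apply, Matrix.cons_val', Matrix.cons_val_zero, Matrix.cons_val_one,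
        Matrix.head_cons, Matrix.empty_val', Matrix.cons_val_fin_one, Matrix.head_fin_const] at E1 E2
      exact key_arith a b c (g 0 0) (g 0 1) (g 1 0) (g 1 1) h1 h2 h3 hg E1 E2
    rw [Nat.card_eq_two_iff]
    refine ⟨Quot.mk rel ⟨Qm, slequiv_refl Qm |>.elim fun g hg => ⟨g, ⟨hg.1 ▸ isUnit_one, hg.2⟩⟩⟩,
      Quot.mk rel ⟨Qn, hGLQn⟩, ?_, ?_⟩
    · intro h
      exact hnot (hequiv.eqvGen_iff.mp (Quot.eqvGen_exact h))
    · apply Set.eq_univ_iff_forall.mpr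
      intro z
      induction z using Quot.ind with
      | _ w =>
        obtain ⟨Q', g, hu, he⟩ := w
        rcases Int.isUnit_iff.mp hu with hg | hg
        · left
          exact Quot.sound (slequiv_symm ⟨g, hg, he⟩)
        · right
          exact Quot.sound (slequiv_symm (hneg Q' g hg he))
  · rw [if_neg hcond]
    -- in this case there is an automorph of determinant -1
    have aut : ∃ h : Matrix (Fin 2) (Fin 2) ℤ, h.det = -1 ∧ hᵀ * Qm * h = Qm := by
      have : 2 * b = 0 ∨ 2 * b = a ∨ a = c := by omega
      rcases this with h | h | h
      · have hb : b = 0 := by omega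
        refine ⟨!![1, 0; 0, -1], by rw [Matrix.det_fin_two_of]; ring, ?_⟩
        rw [hQm, conj_fin_two, hb]; norm_num
      · refine ⟨!![1, 1; 0, -1], by rw [Matrix.det_fin_two_of]; ring, ?_⟩
        rw [hQm, conj_fin_two]
        rw [show a*1^2 + 2*b*1*0 + c*0^2 = a by ring,
          show a*1*1 + b*(1*(-1) + 1*0) + c*0*(-1) = b by ring_nf; omega,
          show a*1^2 + 2*b*1*(-1) + c*(-1)^2 = c by ring_nf; omega]
      · refine ⟨!![0, 1; 1, 0], by rw [Matrix.det_fin_two_of]; ring, ?_⟩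
        rw [hQm, conj_fin_two]
        rw [show a*0^2 + 2*b*0*1 + c*1^2 = a by ring_nf; omega,
          show a*0*1 + b*(0*0 + 1*1) + c*1*0 = b by ring,
          show a*1^2 + 2*b*1*0 + c*0^2 = c by ring_nf; omega]
    obtain ⟨h, hhd, hhe⟩ := aut
    have hGLtoSL : ∀ Q' : Matrix (Fin 2) (Fin 2) ℤ, GLEquiv Qm Q' → SLEquiv Qm Q' := by
      rintro Q' ⟨g, hu, he⟩
      rcases Int.isUnit_iff.mp hu with hg | hg
      · exact ⟨g, hg, he⟩
      · refine ⟨h * g, by rw [Matrix.det_mul, hhd, hg]; ring, ?_⟩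
        calc (h * g)ᵀ * Qm * (h * g) = gᵀ * (hᵀ * Qm * h) * g := by
              rw [Matrix.transpose_mul]; simp only [Matrix.mul_assoc]
          _ = Q' := by rw [hhe, he]
    rw [Nat.card_eq_one_iff_unique]
    constructor
    · constructor
      intro x y
      induction x using Quot.ind with
      | _ w =>
        induction y using Quot.ind with
        | _ w' =>
          exact Quot.sound (slequiv_trans (slequiv_symm (hGLtoSL _ w.2)) (hGLtoSL _ w'.2))
    · exact ⟨Quot.mk rel ⟨Qm, ⟨1, by simp, by simp⟩⟩⟩
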